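/- (Boundedness of the populations.) Assume S(0) ≥ 0, I(0) ≥ 0, γ(t) ≥ 0 and δ₂(t) ≥ 0 for all t ≥ 0, and that there exist constants δ_{m1} > 0, d_m > 0, r_M > 0 and p_M > 0 such that δ₁(t) ≥ δ_{m1}, d(t) ≥ d_m, 0 < r(t) ≤ r_M and 0 < p(t) ≤ p_M for all t ≥ 0. Then the susceptible, infected and total populations are bounded: there exists M < ∞ with 0 ≤ S(t) ≤ M, 0 ≤ I(t) ≤ M and 0 ≤ N(t) ≤ M for all t ≥ 0. -/

import Mathlib

open Set

private lemma sis_hasDerivAt_primitive {f : ℝ → ℝ} (hf : Continuous f) (t : ℝ) :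
    HasDerivAt (fun u => ∫ x in (0:ℝ)..u, f x) (f t) t :=
  intervalIntegral.integral_hasDerivAt_right (hf.intervalIntegrable 0 t)
    (hf.stronglyMeasurableAtFilter _ _) hf.continuousAt

/-- If `f' = g f + q` on `[0,∞)` with `g` continuous, `q ≥ 0` on `[0,∞)` and
`f 0 ≥ 0`, then `f ≥ 0` on `[0,∞)`. -/
private lemma sis_nonneg_of_linODE (g q f : ℝ → ℝ) (hg : Continuous g)
    (hf : ∀ t, 0 ≤ t → HasDerivAt f (g t * f t + q t) t)
    (hq : ∀ t, 0 ≤ t → 0 ≤ q t) (hf0 : 0 ≤ f 0) :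
    ∀ t, 0 ≤ t → 0 ≤ f t := by
  intro t ht
  set v : ℝ → ℝ := fun u => ∫ x in (0:ℝ)..u, g x with hv
  set h : ℝ → ℝ := fun u => f u * Real.exp (-(v u)) with hh
  have hhderiv : ∀ s, 0 ≤ s → HasDerivAt h (q s * Real.exp (-(v s))) s := by
    intro s hs
    have h1 : HasDerivAt v (g s) s := sis_hasDerivAt_primitive hg s
    have h2 : HasDerivAt (fun u => Real.exp (-(v u))) (Real.exp (-(v s)) * (-(g s))) s :=
      (h1.neg).exp
    have h3 : HasDerivAt (fun u => f u * Real.exp (-(v u))) ((g s * f s + q s) * Real.exp (-(v s)) + f s * (Real.exp (-(v s)) * (-(g s)))) s := (hf s hs).mul h2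
    convert h3 using 1
    ring
  have hmono : MonotoneOn h (Icc 0 t) := by
    apply monotoneOn_of_deriv_nonneg (convex_Icc 0 t)
    · intro s hs
      exact ((hhderiv s hs.1).continuousAt).continuousWithinAt
    · intro s hs
      rw [interior_Icc] at hs
      exact ((hhderiv s hs.1.le).differentiableAt).differentiableWithinAt
    · intro s hs
      rw [interior_Icc] at hs
      rw [(hhderiv s hs.1.le).deriv]
      exact mul_nonneg (hq s hs.1.le) (Real.exp_pos _).le
  have key : h 0 ≤ h t := hmono (left_mem_Icc.mpr ht) (right_mem_Icc.mpr ht) ht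
  have hv0 : v 0 = 0 := by simp [hv]
  have hh0 : h 0 = f 0 := by simp [hh, hv0]
  have hft : 0 ≤ f t * Real.exp (-(v t)) := le_trans (by simpa [hh0] using hf0) key
  have hdiv := div_nonneg hft (Real.exp_pos (-(v t))).le
  rwa [mul_div_assoc, div_self (ne_of_gt (Real.exp_pos _)), mul_one] at hdiv

/-- If `f' s ≤ 0` whenever `f s ≥ K` on `[a,b]`, then `f b ≤ max (f a) K`. -/
private lemma sis_le_max_of_deriv_nonpos (f f' : ℝ → ℝ) (K a b : ℝ) (hab : a ≤ b)
    (hf : ∀ s ∈ Icc a b, HasDerivAt f (f' s) s)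
    (hK : ∀ s ∈ Icc a b, K ≤ f s → f' s ≤ 0) :
    f b ≤ max (f a) K := by
  by_contra hcon
  push_neg at hcon
  set c : ℝ := max (f a) K with hc
  have hfc : ContinuousOn f (Icc a b) := fun s hs => ((hf s hs).continuousAt).continuousWithinAt
  set A : Set ℝ := {s ∈ Icc a b | f s ≤ c} with hA
  have hAne : A.Nonempty := ⟨a, ⟨left_mem_Icc.mpr hab, le_max_left _ _⟩⟩
  have hAbd : BddAbove A := ⟨b, fun s hs => hs.1.2⟩
  have hAclosed : IsClosed A := by
    have : A = Icc a b ∩ f ⁻¹' (Iic c) := by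
      ext s; simp [hA, Set.mem_setOf_eq, and_comm]
    rw [this]
    exact ContinuousOn.preimage_isClosed_of_isClosed hfc isClosed_Icc isClosed_Iic
  set t1 : ℝ := sSup A with ht1
  have ht1A : t1 ∈ A := hAclosed.csSup_mem hAne hAbd
  have ht1Icc : t1 ∈ Icc a b := ht1A.1
  have ht1c : f t1 ≤ c := ht1A.2
  have ht1b : t1 < b := by
    rcases lt_or_eq_of_le ht1Icc.2 with h | h
    · exact h
    · exfalso; rw [h] at ht1c; exact absurd ht1c (not_le.mpr hcon)
  have hgt : ∀ s, t1 < s → s ≤ b → c < f s := by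
    intro s hs1 hs2
    by_contra hcon2
    push_neg at hcon2
    have : s ∈ A := ⟨⟨le_trans ht1Icc.1 hs1.le, hs2⟩, hcon2⟩
    exact absurd (le_csSup hAbd this) (not_le.mpr hs1)
  have hanti : AntitoneOn f (Icc t1 b) := by
    apply antitoneOn_of_deriv_nonpos (convex_Icc t1 b)
    · exact hfc.mono (Icc_subset_Icc ht1Icc.1 le_rfl)
    · intro s hs
      rw [interior_Icc] at hs
      have hs' : s ∈ Icc a b := ⟨le_trans ht1Icc.1 hs.1.le, hs.2.le⟩
      exact ((hf s hs').differentiableAt).differentiableWithinAt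
    · intro s hs
      rw [interior_Icc] at hs
      have hs' : s ∈ Icc a b := ⟨le_trans ht1Icc.1 hs.1.le, hs.2.le⟩
      rw [(hf s hs').deriv]
      exact hK s hs' (le_trans (le_max_right _ _) (hgt s hs.1 hs.2.le).le)
  have : f b ≤ f t1 :=
    hanti (left_mem_Icc.mpr ht1b.le) (right_mem_Icc.mpr ht1b.le) ht1b.le
  exact absurd (le_trans this ht1c) (not_le.mpr hcon)

/-- Boundedness of the populations of the SIS model: if `S(0), I(0) ≥ 0`,
`γ, δ₂ ≥ 0`, and there are constants `δ_{m1} > 0`, `d_m > 0`, `r_M > 0`, `p_M > 0`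
with `δ₁ ≥ δ_{m1}`, `d ≥ d_m`, `0 < r ≤ r_M` and `0 < p ≤ p_M` on `[0, ∞)`, then
the susceptible, infected and total populations are bounded on `[0, ∞)`. -/
theorem sis_populations_bounded
    (r d γ β δ1 δ2 p S I : ℝ → ℝ)
    (hrc : Continuous r) (hdc : Continuous d) (hγc : Continuous γ) (hβc : Continuous β)
    (hδ1c : Continuous δ1) (hδ2c : Continuous δ2) (hpc : Continuous p)
    (hppos : ∀ t : ℝ, 0 ≤ t → 0 < p t)
    (hS : ∀ t : ℝ, 0 ≤ t →
      HasDerivAt S (r t * (1 - (δ1 t * S t + δ2 t * I t) / p t) * S t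
        + (γ t - β t * S t) * I t) t)
    (hI : ∀ t : ℝ, 0 ≤ t → HasDerivAt I ((β t * S t - d t - γ t) * I t) t)
    (hS0 : 0 ≤ S 0) (hI0 : 0 ≤ I 0)
    (hγpos : ∀ t : ℝ, 0 ≤ t → 0 ≤ γ t) (hδ2pos : ∀ t : ℝ, 0 ≤ t → 0 ≤ δ2 t)
    (δm1 dm rM pM : ℝ) (hδm1 : 0 < δm1) (hdm : 0 < dm) (hrM : 0 < rM) (hpM : 0 < pM)
    (hδ1 : ∀ t : ℝ, 0 ≤ t → δm1 ≤ δ1 t)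
    (hd : ∀ t : ℝ, 0 ≤ t → dm ≤ d t)
    (hr : ∀ t : ℝ, 0 ≤ t → 0 < r t ∧ r t ≤ rM)
    (hp : ∀ t : ℝ, 0 ≤ t → p t ≤ pM) :
    ∃ M : ℝ, ∀ t : ℝ, 0 ≤ t →
      0 ≤ S t ∧ S t ≤ M ∧ 0 ≤ I t ∧ I t ≤ M ∧ 0 ≤ S t + I t ∧ S t + I t ≤ M := by
  -- continuity of S and I on [0,∞)
  have hScont : ∀ t : ℝ, 0 ≤ t → ContinuousAt S t := fun t ht => (hS t ht).continuousAt
  have hIcont : ∀ t : ℝ, 0 ≤ t → ContinuousAt I t := fun t ht => (hI t ht).continuousAt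
  -- truncation m t = max t 0
  set m : ℝ → ℝ := fun t => max t 0 with hm
  have hmcont : Continuous m := continuous_id.max continuous_const
  have hmnonneg : ∀ t, 0 ≤ m t := fun t => le_max_right t 0
  have hmeq : ∀ t : ℝ, 0 ≤ t → m t = t := fun t ht => max_eq_left ht
  have hSm : Continuous (fun t => S (m t)) := by
    apply continuous_iff_continuousAt.mpr
    intro t
    exact (hScont (m t) (hmnonneg t)).comp hmcont.continuousAt
  have hIm : Continuous (fun t => I (m t)) := by
    apply continuous_iff_continuousAt.mpr
    intro t
    exact (hIcont (m t) (hmnonneg t)).comp hmcont.continuousAt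
  -- nonnegativity of I
  have hInn : ∀ t : ℝ, 0 ≤ t → 0 ≤ I t := by
    set g : ℝ → ℝ := fun t => β (m t) * S (m t) - d (m t) - γ (m t) with hg
    have hgc : Continuous g := (((hβc.comp hmcont).mul hSm).sub (hdc.comp hmcont)).sub
      (hγc.comp hmcont)
    apply sis_nonneg_of_linODE g (fun _ => 0) I hgc
    · intro t ht
      have := hI t ht
      convert this using 1
      simp [hg, hmeq t ht]
    · intro t _; exact le_rfl
    · exact hI0
  -- nonnegativity of S
  have hSnn : ∀ t : ℝ, 0 ≤ t → 0 ≤ S t := by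
    set g : ℝ → ℝ := fun t => r (m t) * (1 - (δ1 (m t) * S (m t) + δ2 (m t) * I (m t)) / p (m t))
      - β (m t) * I (m t) with hg
    have hgc : Continuous g := by
      apply Continuous.sub
      · apply Continuous.mul (hrc.comp hmcont)
        apply Continuous.sub continuous_const
        apply Continuous.div (((hδ1c.comp hmcont).mul hSm).add ((hδ2c.comp hmcont).mul hIm))
          (hpc.comp hmcont)
        intro t
        exact ne_of_gt (hppos (m t) (hmnonneg t))
      · exact (hβc.comp hmcont).mul hIm
    apply sis_nonneg_of_linODE g (fun t => γ t * I t) S hgc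
    · intro t ht
      have := hS t ht
      convert this using 1
      simp only [hg, hmeq t ht]
      ring
    · intro t ht
      exact mul_nonneg (hγpos t ht) (hInn t ht)
    · exact hS0
  -- the constants
  set c : ℝ := rM * pM / (4 * δm1) with hcdef
  have hcpos : 0 < c := by positivity
  set K : ℝ := pM / δm1 + c / dm with hK
  set M : ℝ := max (S 0 + I 0) K with hM
  -- derivative of N = S + I
  set D : ℝ → ℝ := fun s => r s * (1 - (δ1 s * S s + δ2 s * I s) / p s) * S s - d s * I s
    with hD
  have hND : ∀ s : ℝ, 0 ≤ s → HasDerivAt (fun u => S u + I u) (D s) s := by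
    intro s hs
    have : HasDerivAt (fun u => S u + I u) _ s := (hS s hs).add (hI s hs)
    convert this using 1
    simp only [hD]
    ring
  -- key: D s ≤ 0 whenever N s ≥ K
  have hkey : ∀ s : ℝ, 0 ≤ s → K ≤ S s + I s → D s ≤ 0 := by
    intro s hs hNs
    have hSs := hSnn s hs
    have hIs := hInn s hs
    have hps := hppos s hs
    have hpMs := hp s hs
    have hrs := (hr s hs).1
    have hrMs := (hr s hs).2
    have hds := hd s hs
    have hdIs : dm * I s ≤ d s * I s := mul_le_mul_of_nonneg_right hds hIs
    -- G/p ≥ δm1 S / pM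
    have h1 : δm1 * S s / pM ≤ (δ1 s * S s + δ2 s * I s) / p s := by
      have hnum : δm1 * S s ≤ δ1 s * S s + δ2 s * I s := by
        nlinarith [hδ1 s hs, hδ2pos s hs]
      have hGnn : 0 ≤ δ1 s * S s + δ2 s * I s := le_trans (by positivity) hnum
      rw [div_le_div_iff₀ hpM hps]
      nlinarith [mul_nonneg (sub_nonneg.mpr hnum) hps.le,
        mul_nonneg hGnn (sub_nonneg.mpr hpMs)]
    have h2 : r s * (1 - (δ1 s * S s + δ2 s * I s) / p s) * S s
        ≤ r s * (1 - δm1 * S s / pM) * S s := by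
      apply mul_le_mul_of_nonneg_right _ hSs
      apply mul_le_mul_of_nonneg_left _ hrs.le
      linarith
    rcases le_or_gt (pM / δm1) (S s) with hcase | hcase
    · -- S large: first term nonpositive
      have h3 : 1 - δm1 * S s / pM ≤ 0 := by
        have hle : pM ≤ δm1 * S s := by
          rw [div_le_iff₀ hδm1] at hcase
          linarith
        have h1d : (1:ℝ) ≤ δm1 * S s / pM := (one_le_div hpM).mpr hle
        linarith
      have h4 : r s * (1 - δm1 * S s / pM) * S s ≤ 0 :=
        mul_nonpos_of_nonpos_of_nonneg (mul_nonpos_of_nonneg_of_nonpos hrs.le h3) hSs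
      have : D s ≤ 0 - dm * I s := by
        simp only [hD]
        have := le_trans h2 h4
        linarith
      nlinarith
    · -- S small: I large
      have hIlarge : c / dm ≤ I s := by
        have : pM / δm1 + c / dm ≤ S s + I s := hNs
        linarith
      have hcI : c ≤ dm * I s := by
        rw [div_le_iff₀ hdm] at hIlarge
        linarith [hIlarge]
      -- quadratic bound
      have hquad : (1 - δm1 * S s / pM) * S s ≤ pM / (4 * δm1) := by
        have h4pos : (0:ℝ) < 4 * δm1 := by positivity
        rw [le_div_iff₀ h4pos]
        apply le_of_mul_le_mul_right _ hpM
        have e : (1 - δm1 * S s / pM) * S s * (4 * δm1) * pM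
            = (pM - δm1 * S s) * S s * (4 * δm1) := by
          field_simp
        rw [e]
        nlinarith [sq_nonneg (pM - 2 * δm1 * S s)]
      have h5 : r s * (1 - δm1 * S s / pM) * S s ≤ c := by
        rcases le_or_gt ((1 - δm1 * S s / pM) * S s) 0 with hx | hx
        · calc r s * (1 - δm1 * S s / pM) * S s = r s * ((1 - δm1 * S s / pM) * S s) := by ring
            _ ≤ 0 := mul_nonpos_of_nonneg_of_nonpos hrs.le hx
            _ ≤ c := hcpos.le
        · calc r s * (1 - δm1 * S s / pM) * S s = r s * ((1 - δm1 * S s / pM) * S s) := by ring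
            _ ≤ rM * (pM / (4 * δm1)) := mul_le_mul hrMs hquad hx.le hrM.le
            _ = c := by rw [hcdef, mul_div_assoc]
      simp only [hD]
      linarith [le_trans h2 h5, hcI, hdIs]
  -- conclude
  refine ⟨M, fun t ht => ?_⟩
  have hSt := hSnn t ht
  have hIt := hInn t ht
  have hNle : S t + I t ≤ M := by
    have := sis_le_max_of_deriv_nonpos (fun u => S u + I u) D K 0 t ht
      (fun s hs => hND s hs.1) (fun s hs hKs => hkey s hs.1 hKs)
    simpa [hM] using this
  exact ⟨hSt, by linarith, hIt, by linarith, by linarith, hNle⟩
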